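/- Let X be a random vector in ℝⁿ. Then P(X ∈ C_n(X)) = 1, i.e. X takes values almost surely in its n-dimensional mould. -/

import Mathlib

open MeasureTheory Filter Metric ENNReal

/-- Key density lemma: for a finite measure `ν` on `ℝⁿ`, for `ν`-a.e. point `x`, the liminf
of `ν (ball x ε) / ε ^ n` as `ε → 0⁺` is positive. -/
theorem ae_liminf_ball_pos {n : ℕ} (ν : Measure (EuclideanSpace ℝ (Fin n)))
    [IsFiniteMeasure ν] :
    ∀ᵐ x ∂ν, 0 < Filter.liminf
        (fun ε : ℝ => ν (ball x ε) / ENNReal.ofReal (ε ^ n))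
        (nhdsWithin 0 (Set.Ioi 0)) := by
  have h1 := Besicovitch.ae_tendsto_rnDeriv (volume : Measure (EuclideanSpace ℝ (Fin n))) ν
  have h2 := Measure.rnDeriv_lt_top (volume : Measure (EuclideanSpace ℝ (Fin n))) ν
  filter_upwards [h1, h2] with x hx hL
  set L := (volume : Measure (EuclideanSpace ℝ (Fin n))).rnDeriv ν x with hLdef
  set c := (volume : Measure (EuclideanSpace ℝ (Fin n))) (closedBall (0 : EuclideanSpace ℝ (Fin n)) 1) with hc
  have hcpos : 0 < c := measure_closedBall_pos _ _ one_pos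
  have hcfin : c < ∞ := measure_closedBall_lt_top
  -- eventually the ratio vol/ν is < L + 1, giving a lower bound on ν of closed balls
  have hev : ∀ᶠ r in nhdsWithin (0:ℝ) (Set.Ioi 0),
      (volume : Measure (EuclideanSpace ℝ (Fin n))) (closedBall x r) / ν (closedBall x r) < L + 1 := by
    apply hx.eventually_lt_const
    exact ENNReal.lt_add_right hL.ne one_ne_zero
  have hLfin : L + 1 ≠ ∞ := by
    simp [ENNReal.add_ne_top, hL.ne]
  have hball : ∀ᶠ r in nhdsWithin (0:ℝ) (Set.Ioi 0),
      ENNReal.ofReal (r ^ n) * c / (L + 1) ≤ ν (closedBall x r) := by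
    filter_upwards [hev, self_mem_nhdsWithin] with r hr hrpos
    have hrpos' : (0:ℝ) < r := hrpos
    have hvol : (volume : Measure (EuclideanSpace ℝ (Fin n))) (closedBall x r)
        = ENNReal.ofReal (r ^ n) * c := by
      rw [Measure.addHaar_closedBall' _ _ hrpos'.le, finrank_euclideanSpace_fin]
    rw [hvol] at hr
    have hnum : ENNReal.ofReal (r ^ n) * c ≠ 0 := by
      apply mul_ne_zero _ hcpos.ne'
      simp [ENNReal.ofReal_eq_zero, not_le, pow_pos hrpos']
    rcases eq_or_ne (ν (closedBall x r)) 0 with h0 | h0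
    · rw [h0, ENNReal.div_zero hnum] at hr
      exact absurd hr (by simp)
    · rw [ENNReal.div_lt_iff (Or.inl h0) (Or.inl (measure_ne_top ν _))] at hr
      rw [ENNReal.div_le_iff (by simp) hLfin]
      calc ENNReal.ofReal (r ^ n) * c ≤ (L + 1) * ν (closedBall x r) := hr.le
        _ = ν (closedBall x r) * (L + 1) := mul_comm _ _
  -- hence a lower bound on ν of open balls, after halving the radius
  set K := ENNReal.ofReal ((1/2 : ℝ) ^ n) * c / (L + 1) with hK
  have hKpos : 0 < K := by
    apply ENNReal.div_pos _ hLfin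
    apply mul_ne_zero _ hcpos.ne'
    simp [ENNReal.ofReal_eq_zero, not_le, pow_pos]
  have hbound : ∀ᶠ ε in nhdsWithin (0:ℝ) (Set.Ioi 0),
      K ≤ ν (ball x ε) / ENNReal.ofReal (ε ^ n) := by
    have hhalf : Tendsto (fun ε : ℝ => ε / 2) (nhdsWithin (0:ℝ) (Set.Ioi 0))
        (nhdsWithin (0:ℝ) (Set.Ioi 0)) := by
      apply tendsto_nhdsWithin_of_tendsto_nhds_of_eventually_within
      · have h0 : Tendsto (fun ε : ℝ => ε / 2) (nhds 0) (nhds (0/2)) :=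
          (tendsto_id (x := nhds (0:ℝ))).div_const 2
        simpa using h0.mono_left (nhdsWithin_le_nhds (s := Set.Ioi (0:ℝ)))
      · filter_upwards [self_mem_nhdsWithin] with ε hε
        exact div_pos hε (two_pos : (0:ℝ) < 2)
    filter_upwards [hhalf.eventually hball, self_mem_nhdsWithin] with ε hε hεpos
    have hεpos' : (0:ℝ) < ε := hεpos
    have h1 : ν (closedBall x (ε/2)) ≤ ν (ball x ε) := by
      apply measure_mono
      intro y hy
      simp only [mem_closedBall, mem_ball] at hy ⊢
      linarith
    have h2 : ENNReal.ofReal ((ε/2) ^ n) * c / (L + 1) ≤ ν (ball x ε) := le_trans hε h1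
    have h3 : ENNReal.ofReal ((ε/2) ^ n) = ENNReal.ofReal (ε ^ n) * ENNReal.ofReal ((1/2:ℝ) ^ n) := by
      rw [← ENNReal.ofReal_mul (by positivity)]
      congr 1
      rw [div_pow, one_div, inv_pow]
      ring
    rw [ENNReal.le_div_iff_mul_le (Or.inl (by simp [ENNReal.ofReal_eq_zero, not_le, pow_pos hεpos']))
      (Or.inl ENNReal.ofReal_ne_top)]
    calc K * ENNReal.ofReal (ε ^ n)
        = ENNReal.ofReal ((ε/2) ^ n) * c / (L + 1) := by
          rw [hK, h3]
          simp only [div_eq_mul_inv]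
          ring
      _ ≤ ν (ball x ε) := h2
  calc (0:ℝ≥0∞) < K := hKpos
    _ ≤ Filter.liminf (fun ε : ℝ => ν (ball x ε) / ENNReal.ofReal (ε ^ n))
        (nhdsWithin 0 (Set.Ioi 0)) := le_liminf_of_le (by isBoundedDefault) hbound

/-- Every random vector `X` in `ℝⁿ` takes values almost surely in its
`n`-dimensional mould: `P(X ∈ C_n(X)) = 1`. -/
theorem ae_mem_mould {Ω : Type*} [MeasurableSpace Ω]
    (μ : Measure Ω) [IsProbabilityMeasure μ] {n : ℕ}
    (X : Ω → EuclideanSpace ℝ (Fin n)) (hX : Measurable X) :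
    μ {ω | 0 < Filter.liminf
        (fun ε : ℝ => μ {ω' | ‖X ω' - X ω‖ < ε} / ENNReal.ofReal (ε ^ n))
        (nhdsWithin 0 (Set.Ioi 0))} = 1 := by
  set ν := μ.map X with hν
  haveI : IsProbabilityMeasure ν := Measure.isProbabilityMeasure_map hX.aemeasurable
  have hballs : ∀ (ω : Ω) (ε : ℝ), μ {ω' | ‖X ω' - X ω‖ < ε} = ν (ball (X ω) ε) := by
    intro ω ε
    rw [hν, Measure.map_apply hX measurableSet_ball]
    have hpre : X ⁻¹' ball (X ω) ε = {ω' | ‖X ω' - X ω‖ < ε} := by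
      ext ω'
      simp [mem_ball, dist_eq_norm]
    rw [hpre]
  have key : ∀ᵐ ω ∂μ, 0 < Filter.liminf
      (fun ε : ℝ => μ {ω' | ‖X ω' - X ω‖ < ε} / ENNReal.ofReal (ε ^ n))
      (nhdsWithin 0 (Set.Ioi 0)) := by
    have := ae_of_ae_map hX.aemeasurable (ae_liminf_ball_pos ν)
    filter_upwards [this] with ω hω
    simpa only [hballs ω] using hω
  rw [Filter.eventually_iff, mem_ae_iff] at key
  have h1 : (1:ℝ≥0∞) ≤ μ {ω | 0 < Filter.liminf
        (fun ε : ℝ => μ {ω' | ‖X ω' - X ω‖ < ε} / ENNReal.ofReal (ε ^ n))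
        (nhdsWithin 0 (Set.Ioi 0))} := by
    have := measure_union_le (μ := μ) {ω | 0 < Filter.liminf
        (fun ε : ℝ => μ {ω' | ‖X ω' - X ω‖ < ε} / ENNReal.ofReal (ε ^ n))
        (nhdsWithin 0 (Set.Ioi 0))}
      {ω | 0 < Filter.liminf
        (fun ε : ℝ => μ {ω' | ‖X ω' - X ω‖ < ε} / ENNReal.ofReal (ε ^ n))
        (nhdsWithin 0 (Set.Ioi 0))}ᶜ
    rw [Set.union_compl_self, measure_univ, key, add_zero] at this
    exact this
  exact le_antisymm prob_le_one h1
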